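/- Existence of nontrivial logical operator on the enlarged support: For a commuting projector code with code projector Π = ∏_a Π_a, if M is not correctable then there exists a nontrivial Hermitian logical operator H supported on M' (the union of M with the supports of all projectors acting nontrivially on M), i.e., H is Hermitian, supported on M', commutes with every Π_a, and Π H Π is not a scalar multiple of Π. -/

import Mathlib

open Matrix

/-- An operator on `n` qubits is supported on a set `M` of qubits if it acts as the
identity on the qubits outside `M`. -/
def SupportedOn {n : ℕ} (M : Set (Fin n))
    (O : Matrix (Fin n → Fin 2) (Fin n → Fin 2) ℂ) : Prop :=
  (∀ f g, (∃ i ∉ M, f i ≠ g i) → O f g = 0) ∧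
  (∀ f g f' g', (∀ i ∈ M, f i = f' i) → (∀ i ∈ M, g i = g' i) →
    (∀ i ∉ M, f i = g i) → (∀ i ∉ M, f' i = g' i) → O f g = O f' g')

/-- The support of an operator: the set of qubits on which it acts nontrivially. -/
def opSupport {n : ℕ} (O : Matrix (Fin n → Fin 2) (Fin n → Fin 2) ℂ) : Set (Fin n) :=
  {i | ¬ SupportedOn ({i}ᶜ) O}

namespace StmtAux

variable {n : ℕ}

abbrev Op (n : ℕ) := Matrix (Fin n → Fin 2) (Fin n → Fin 2) ℂ

lemma supportedOn_mono {S T : Set (Fin n)} {O : Op n} (hST : S ⊆ T)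
    (h : SupportedOn S O) : SupportedOn T O := by
  obtain ⟨h1, h2⟩ := h
  constructor
  · rintro f g ⟨i, hi, hne⟩
    exact h1 f g ⟨i, fun hiS => hi (hST hiS), hne⟩
  · intro f g f' g' hf hg hfg hfg'
    by_cases hcase : ∀ i, i ∉ S → f i = g i
    · apply h2 <;> intro i hi
      · exact hf i (hST hi)
      · exact hg i (hST hi)
      · exact hcase i hi
      · by_cases hiT : i ∈ T
        · rw [← hf i hiT, ← hg i hiT]; exact hcase i hi
        · exact hfg' i hiT
    · push_neg at hcase
      obtain ⟨i, hiS, hne⟩ := hcase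
      have hiT : i ∈ T := by
        by_contra hiT; exact hne (hfg i hiT)
      rw [h1 f g ⟨i, hiS, hne⟩, h1 f' g' ⟨i, hiS, ?_⟩]
      rw [← hf i hiT, ← hg i hiT]; exact hne

lemma supportedOn_inter {S T : Set (Fin n)} {O : Op n}
    (hS : SupportedOn S O) (hT : SupportedOn T O) : SupportedOn (S ∩ T) O := by
  classical
  constructor
  · rintro f g ⟨i, hi, hne⟩
    rcases (not_and_or.mp (by simpa [Set.mem_inter_iff] using hi)) with h | h
    · exact hS.1 f g ⟨i, h, hne⟩
    · exact hT.1 f g ⟨i, h, hne⟩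
  · intro f g f' g' hf hg hfg hfg'
    set u : Fin n → Fin 2 := fun i => if i ∈ S then f i else f' i with hu
    set v : Fin n → Fin 2 := fun i => if i ∈ S then g i else g' i with hv
    have h1 : O f g = O u v := by
      apply hS.2 <;> intro i hi
      · simp [u, hi]
      · simp [v, hi]
      · exact hfg i (fun hm => hi hm.1)
      · simp only [u, v, if_neg hi]; exact hfg' i (fun hm => hi hm.1)
    have h2 : O u v = O f' g' := by
      apply hT.2 <;> intro i hi
      · by_cases hiS : i ∈ S
        · simp only [u, if_pos hiS]; exact hf i ⟨hiS, hi⟩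
        · simp [u, hiS]
      · by_cases hiS : i ∈ S
        · simp only [v, if_pos hiS]; exact hg i ⟨hiS, hi⟩
        · simp [v, hiS]
      · by_cases hiS : i ∈ S
        · simp only [u, v, if_pos hiS]; exact hfg i (fun hm => hi hm.2)
        · simp only [u, v, if_neg hiS]; exact hfg' i (fun hm => hi hm.2)
      · exact hfg' i (fun hm => hi hm.2)
    rw [h1, h2]

lemma supportedOn_univ (O : Op n) : SupportedOn Set.univ O := by
  constructor
  · rintro f g ⟨i, hi, -⟩
    exact absurd (Set.mem_univ i) hi
  · intro f g f' g' hf hg _ _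
    have : f = f' := funext fun i => hf i (Set.mem_univ i)
    have : g = g' := funext fun i => hg i (Set.mem_univ i)
    simp_all

lemma supportedOn_biInter (s : Finset (Fin n)) (O : Op n)
    (h : ∀ i ∈ s, SupportedOn {i}ᶜ O) :
    SupportedOn (⋂ i ∈ s, ({i}ᶜ : Set (Fin n))) O := by
  classical
  induction s using Finset.induction with
  | empty => simpa using supportedOn_univ O
  | @insert a s ha ih =>
    rw [Finset.set_biInter_insert]
    exact supportedOn_inter (h a (Finset.mem_insert_self a s))
      (ih fun i hi => h i (Finset.mem_insert_of_mem hi))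

lemma supportedOn_opSupport (O : Op n) : SupportedOn (opSupport O) O := by
  classical
  have key := supportedOn_biInter
    (Finset.univ.filter (fun i => SupportedOn ({i}ᶜ) O)) O (by simp)
  have heq : (⋂ i ∈ Finset.univ.filter (fun i => SupportedOn ({i}ᶜ : Set (Fin n)) O),
      ({i}ᶜ : Set (Fin n))) = opSupport O := by
    ext j
    simp only [Set.mem_iInter, Finset.mem_filter, Finset.mem_univ, true_and,
      Set.mem_compl_iff, Set.mem_singleton_iff, opSupport, Set.mem_setOf_eq]
    constructor
    · intro hj hsupp
      exact hj j hsupp rfl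
    · intro hj i hi hji
      exact hj (hji ▸ hi)
  rwa [heq] at key

lemma fin2_add_add : ∀ a b c : Fin 2, a + b + (a + b + c) = c := by decide

lemma fin2_cancel : ∀ a b c : Fin 2, a + b + c = b ↔ c = a := by decide

lemma supportedOn_mul {S T : Set (Fin n)} {O P : Op n}
    (hO : SupportedOn S O) (hP : SupportedOn T P) : SupportedOn (S ∪ T) (O * P) := by
  classical
  constructor
  · rintro f g ⟨i, hi, hne⟩
    have hiS : i ∉ S := fun h => hi (Or.inl h)
    have hiT : i ∉ T := fun h => hi (Or.inr h)
    rw [Matrix.mul_apply]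
    apply Finset.sum_eq_zero
    intro h _
    by_cases hfh : f i = h i
    · have : P h g = 0 := hP.1 h g ⟨i, hiT, by rw [← hfh]; exact hne⟩
      simp [this]
    · have : O f h = 0 := hO.1 f h ⟨i, hiS, hfh⟩
      simp [this]
  · intro f g f' g' hf hg hfg hfg'
    rw [Matrix.mul_apply, Matrix.mul_apply]
    set θ : (Fin n → Fin 2) → (Fin n → Fin 2) :=
      fun h i => if i ∈ S ∪ T then h i else f i + f' i + h i with hθ
    have hinv : Function.Involutive θ := by
      intro h; funext i
      by_cases hi : i ∈ S ∪ T
      · simp only [θ, if_pos hi]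
      · simp only [θ, if_neg hi, fin2_add_add]
    rw [← hinv.bijective.sum_comp (fun h => O f' h * P h g')]
    apply Finset.sum_congr rfl
    intro h _
    by_cases hA : ∀ i, i ∉ S ∪ T → h i = f i
    · -- case A
      have hk : ∀ i, i ∉ S ∪ T → θ h i = f' i := by
        intro i hi
        simp only [θ, if_neg hi, hA i hi, fin2_cancel]
      have hkon : ∀ i, i ∈ S ∪ T → θ h i = h i := by
        intro i hi; simp only [θ, if_pos hi]
      have e1 : O f h = O f' (θ h) := by
        by_cases hOS : ∀ i, i ∉ S → f i = h i
        · apply hO.2 <;> intro i hi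
          · exact hf i (Or.inl hi)
          · exact (hkon i (Or.inl hi)).symm
          · exact hOS i hi
          · by_cases hiT : i ∈ T
            · rw [hkon i (Or.inr hiT), ← hf i (Or.inr hiT)]
              exact hOS i hi
            · exact (hk i (fun hu => hu.elim hi hiT)).symm
        · push_neg at hOS
          obtain ⟨i, hiS, hne⟩ := hOS
          have hiT : i ∈ T := by
            by_contra hiT
            exact hne (hA i (fun hu => hu.elim hiS hiT)).symm
          rw [hO.1 f h ⟨i, hiS, hne⟩, hO.1 f' (θ h) ⟨i, hiS, ?_⟩]
          rw [hkon i (Or.inr hiT), ← hf i (Or.inr hiT)]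
          exact hne
      have e2 : P h g = P (θ h) g' := by
        by_cases hPT : ∀ i, i ∉ T → h i = g i
        · apply hP.2 <;> intro i hi
          · exact (hkon i (Or.inr hi)).symm
          · exact hg i (Or.inr hi)
          · exact hPT i hi
          · by_cases hiS : i ∈ S
            · rw [hkon i (Or.inl hiS), ← hg i (Or.inl hiS)]
              exact hPT i hi
            · rw [hk i (fun hu => hu.elim hiS hi)]
              exact hfg' i (fun hu => hu.elim hiS hi)
        · push_neg at hPT
          obtain ⟨i, hiT, hne⟩ := hPT
          have hiS : i ∈ S := by
            by_contra hiS
            exact hne (((hA i (fun hu => hu.elim hiS hiT)).trans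
              (hfg i (fun hu => hu.elim hiS hiT))))
          rw [hP.1 h g ⟨i, hiT, hne⟩, hP.1 (θ h) g' ⟨i, hiT, ?_⟩]
          rw [hkon i (Or.inl hiS), ← hg i (Or.inl hiS)]
          exact hne
      rw [e1, e2]
    · -- case B: both sides zero
      push_neg at hA
      obtain ⟨i, hi, hne⟩ := hA
      have hiS : i ∉ S := fun h => hi (Or.inl h)
      have z1 : O f h = 0 := hO.1 f h ⟨i, hiS, fun e => hne e.symm⟩
      have z2 : O f' (θ h) = 0 := by
        apply hO.1 f' (θ h) ⟨i, hiS, ?_⟩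
        simp only [θ, if_neg hi]
        rw [ne_comm, Ne, fin2_cancel]
        exact hne
      rw [z1, z2, zero_mul, zero_mul]
lemma supportedOn_conjTranspose {S : Set (Fin n)} {O : Op n}
    (h : SupportedOn S O) : SupportedOn S Oᴴ := by
  constructor
  · rintro f g ⟨i, hi, hne⟩
    rw [Matrix.conjTranspose_apply, h.1 g f ⟨i, hi, fun e => hne e.symm⟩, star_zero]
  · intro f g f' g' hf hg hfg hfg'
    rw [Matrix.conjTranspose_apply, Matrix.conjTranspose_apply,
      h.2 g f g' f' hg hf (fun i hi => (hfg i hi).symm) (fun i hi => (hfg' i hi).symm)]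

lemma supportedOn_add {S : Set (Fin n)} {O P : Op n}
    (hO : SupportedOn S O) (hP : SupportedOn S P) : SupportedOn S (O + P) := by
  constructor
  · intro f g h
    simp [Matrix.add_apply, hO.1 f g h, hP.1 f g h]
  · intro f g f' g' hf hg hfg hfg'
    simp [Matrix.add_apply, hO.2 f g f' g' hf hg hfg hfg', hP.2 f g f' g' hf hg hfg hfg']

lemma supportedOn_smul {S : Set (Fin n)} {O : Op n} (c : ℂ)
    (hO : SupportedOn S O) : SupportedOn S (c • O) := by
  constructor
  · intro f g h
    simp [Matrix.smul_apply, hO.1 f g h]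
  · intro f g f' g' hf hg hfg hfg'
    simp [Matrix.smul_apply, hO.2 f g f' g' hf hg hfg hfg']

lemma supportedOn_neg {S : Set (Fin n)} {O : Op n}
    (hO : SupportedOn S O) : SupportedOn S (-O) := by
  have := supportedOn_smul (-1 : ℂ) hO
  simpa using this

lemma supportedOn_one (S : Set (Fin n)) : SupportedOn S (1 : Op n) := by
  constructor
  · rintro f g ⟨i, hi, hne⟩
    exact Matrix.one_apply_ne (fun e => hne (congrFun e i))
  · intro f g f' g' hf hg hfg hfg'
    by_cases hfgeq : f = g
    · subst hfgeq
      have : f' = g' := by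
        funext i
        by_cases hi : i ∈ S
        · rw [← hf i hi, ← hg i hi]
        · exact hfg' i hi
      rw [this, Matrix.one_apply_eq, Matrix.one_apply_eq]
    · have : ∃ i, f i ≠ g i := by
        by_contra hc; push_neg at hc; exact hfgeq (funext hc)
      obtain ⟨i, hne⟩ := this
      have hi : i ∈ S := by
        by_contra hi; exact hne (hfg i hi)
      have hne' : f' ≠ g' := fun e => hne (by rw [hf i hi, hg i hi, e])
      rw [Matrix.one_apply_ne (fun e => hne (congrFun e i)),
        Matrix.one_apply_ne hne']

lemma commute_of_disjoint {M : Set (Fin n)} {O P : Op n}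
    (hO : SupportedOn M O) (hP : SupportedOn Mᶜ P) : Commute O P := by
  classical
  show O * P = P * O
  ext f g
  rw [Matrix.mul_apply, Matrix.mul_apply]
  set h₀ : Fin n → Fin 2 := fun i => if i ∈ M then g i else f i with hh0
  set h₁ : Fin n → Fin 2 := fun i => if i ∈ M then f i else g i with hh1
  rw [Finset.sum_eq_single h₀ ?_ (by simp), Finset.sum_eq_single h₁ ?_ (by simp)]
  · have e1 : O f h₀ = O h₁ g := by
      apply hO.2 <;> intro i hi
      · simp only [h₁, if_pos hi]
      · simp only [h₀, if_pos hi]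
      · simp only [h₀, if_neg hi]
      · simp only [h₁, if_neg hi]
    have e2 : P h₀ g = P f h₁ := by
      apply hP.2 <;> intro i hi
      · simp only [h₀, if_neg (Set.mem_compl_iff M i |>.mp hi)]
      · simp only [h₁, if_neg (Set.mem_compl_iff M i |>.mp hi)]
      · have hiM : i ∈ M := by simpa using hi
        simp only [h₀, if_pos hiM]
      · have hiM : i ∈ M := by simpa using hi
        simp only [h₁, if_pos hiM]
    rw [e1, e2, mul_comm]
  · intro b _ hb
    have : ∃ i, b i ≠ h₁ i := by
      by_contra hc; push_neg at hc; exact hb (funext hc)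
    obtain ⟨i, hne⟩ := this
    by_cases hi : i ∈ M
    · have : P f b = 0 := by
        apply hP.1 f b ⟨i, by simpa using hi, ?_⟩
        intro e
        exact hne (by simp only [h₁, if_pos hi, ← e])
      rw [this, zero_mul]
    · have : O b g = 0 := by
        apply hO.1 b g ⟨i, hi, ?_⟩
        intro e
        exact hne (by simp only [h₁, if_neg hi, e])
      rw [this, mul_zero]
  · intro b _ hb
    have : ∃ i, b i ≠ h₀ i := by
      by_contra hc; push_neg at hc; exact hb (funext hc)
    obtain ⟨i, hne⟩ := this
    by_cases hi : i ∈ M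
    · have : P b g = 0 := by
        apply hP.1 b g ⟨i, by simpa using hi, ?_⟩
        intro e
        exact hne (by simp only [h₀, if_pos hi, e])
      rw [this, mul_zero]
    · have : O f b = 0 := by
        apply hO.1 f b ⟨i, hi, ?_⟩
        intro e
        exact hne (by simp only [h₀, if_neg hi, ← e])
      rw [this, zero_mul]
section NCP

variable {ι : Type*} {Qa : ι → Op n}

lemma absorb_left (hproj : ∀ a, Qa a * Qa a = Qa a)
    (s : Finset ι) (comm) {a : ι} (ha : a ∈ s) :
    Qa a * s.noncommProd Qa comm = s.noncommProd Qa comm := by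
  classical
  rw [← Finset.mul_noncommProd_erase s ha Qa comm, ← mul_assoc, hproj a]

lemma absorb_right (hproj : ∀ a, Qa a * Qa a = Qa a)
    (s : Finset ι) (comm) {a : ι} (ha : a ∈ s) :
    s.noncommProd Qa comm * Qa a = s.noncommProd Qa comm := by
  classical
  rw [← Finset.noncommProd_erase_mul s ha Qa comm, mul_assoc, hproj a]

lemma noncommProd_herm (hherm : ∀ a, (Qa a)ᴴ = Qa a)
    (hcommall : ∀ a b, Commute (Qa a) (Qa b)) :
    ∀ (s : Finset ι) (comm), ((s.noncommProd Qa comm)ᴴ : Op n) = s.noncommProd Qa comm := by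
  classical
  intro s
  induction s using Finset.induction with
  | empty => intro comm; simp
  | @insert a s ha ih =>
    intro comm
    rw [Finset.noncommProd_insert_of_notMem _ _ _ _ ha, Matrix.conjTranspose_mul, ih _,
      hherm]
    exact ((Finset.noncommProd_commute s Qa _ (Qa a) (fun x _ => hcommall a x)).eq).symm

lemma noncommProd_supported {U : Set (Fin n)} :
    ∀ (s : Finset ι), (∀ a ∈ s, SupportedOn U (Qa a)) →
      ∀ comm, SupportedOn U (s.noncommProd Qa comm) := by
  classical
  intro s
  induction s using Finset.induction with
  | empty => intro _ comm; rw [Finset.noncommProd_empty]; exact supportedOn_one U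
  | @insert a s ha ih =>
    intro hsup comm
    rw [Finset.noncommProd_insert_of_notMem _ _ _ _ ha]
    have := supportedOn_mul (hsup a (Finset.mem_insert_self a s))
      (ih (fun b hb => hsup b (Finset.mem_insert_of_mem hb))
        (comm.mono fun x hx => Finset.mem_coe.mpr
          (Finset.mem_insert_of_mem (Finset.mem_coe.mp hx))))
    rwa [Set.union_self] at this

lemma mul_noncommProd_absorb {Q : Op n} :
    ∀ (s : Finset ι), (∀ a ∈ s, Q * Qa a = Q) →
      ∀ comm, Q * s.noncommProd Qa comm = Q := by
  classical
  intro s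
  induction s using Finset.induction with
  | empty => intro _ comm; rw [Finset.noncommProd_empty, mul_one]
  | @insert a s ha ih =>
    intro habs comm
    rw [Finset.noncommProd_insert_of_notMem _ _ _ _ ha, ← mul_assoc,
      habs a (Finset.mem_insert_self a s), ih (fun b hb => habs b (Finset.mem_insert_of_mem hb))]

lemma noncommProd_mul_absorb {Q : Op n} :
    ∀ (s : Finset ι), (∀ a ∈ s, Qa a * Q = Q) →
      ∀ comm, s.noncommProd Qa comm * Q = Q := by
  classical
  intro s
  induction s using Finset.induction with
  | empty => intro _ comm; rw [Finset.noncommProd_empty, one_mul]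
  | @insert a s ha ih =>
    intro habs comm
    rw [Finset.noncommProd_insert_of_notMem _ _ _ _ ha, mul_assoc,
      ih (fun b hb => habs b (Finset.mem_insert_of_mem hb)),
      habs a (Finset.mem_insert_self a s)]

end NCP

end StmtAux

open StmtAux

/-- Existence of a nontrivial Hermitian logical operator on the enlarged support:
for a commuting projector code with nonzero code projector `Q = ∏_a Q_a`, if `M` is not
correctable, then there is a Hermitian operator `H` supported on
`M' = M ∪ (supports of all projectors acting nontrivially on M)` which commutes with
every projector `Q_a` and whose action `Q H Q` on the code space is not proportional
to `Q`. -/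
theorem stmt10 (n : ℕ) (ι : Type*) [Fintype ι]
    (Qa : ι → Matrix (Fin n → Fin 2) (Fin n → Fin 2) ℂ)
    (hproj : ∀ a, Qa a * Qa a = Qa a) (hherm : ∀ a, (Qa a)ᴴ = Qa a)
    (hcomm : ((Finset.univ : Finset ι) : Set ι).Pairwise fun a b => Commute (Qa a) (Qa b))
    (Q : Matrix (Fin n → Fin 2) (Fin n → Fin 2) ℂ)
    (hQ : Q = Finset.univ.noncommProd Qa hcomm) (hQne : Q ≠ 0)
    (M : Set (Fin n))
    (hnc : ∃ O, SupportedOn M O ∧ ¬∃ c : ℂ, Q * O * Q = c • Q) :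
    ∃ H : Matrix (Fin n → Fin 2) (Fin n → Fin 2) ℂ,
      Hᴴ = H ∧
      SupportedOn (M ∪ ⋃ a ∈ {a | ¬ SupportedOn Mᶜ (Qa a)}, opSupport (Qa a)) H ∧
      (∀ a, Commute (Qa a) H) ∧
      ¬∃ c : ℂ, Q * H * Q = c • Q := by
  classical
  obtain ⟨O, hOsup, hOnc⟩ := hnc
  have hcommall : ∀ a b, Commute (Qa a) (Qa b) := by
    intro a b
    by_cases hab : a = b
    · subst hab; exact Commute.refl _
    · exact hcomm (by simp) (by simp) hab
  have hpair : ∀ s : Finset ι, (↑s : Set ι).Pairwise fun a b => Commute (Qa a) (Qa b) :=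
    fun s a _ b _ hab => hcommall a b
  set U : Set (Fin n) := ⋃ a ∈ {a | ¬ SupportedOn Mᶜ (Qa a)}, opSupport (Qa a) with hU
  set S : Finset ι := Finset.univ.filter (fun a => ¬ SupportedOn Mᶜ (Qa a)) with hS
  set A : Op n := S.noncommProd Qa (hpair S) with hA
  -- basic absorption facts for Q
  have hQQa : ∀ a, Q * Qa a = Q := by
    intro a; rw [hQ]; exact absorb_right hproj _ hcomm (Finset.mem_univ a)
  have hQaQ : ∀ a, Qa a * Q = Q := by
    intro a; rw [hQ]; exact absorb_left hproj _ hcomm (Finset.mem_univ a)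
  have hQA : Q * A = Q := mul_noncommProd_absorb S (fun a _ => hQQa a) _
  have hAQ : A * Q = Q := noncommProd_mul_absorb S (fun a _ => hQaQ a) _
  have hAherm : Aᴴ = A := noncommProd_herm hherm hcommall S _
  have hAsup : SupportedOn U A := by
    apply noncommProd_supported S ?_ _
    intro a haS
    have haS' : ¬ SupportedOn Mᶜ (Qa a) := (Finset.mem_filter.mp haS).2
    exact supportedOn_mono (Set.subset_biUnion_of_mem haS') (supportedOn_opSupport (Qa a))
  -- choose a Hermitian O₁ supported on M with Q O₁ Q not proportional to Q
  have hkey : ∃ O₁ : Op n, O₁ᴴ = O₁ ∧ SupportedOn M O₁ ∧ ¬∃ c : ℂ, Q * O₁ * Q = c • Q := by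
    by_cases h1 : ∃ c : ℂ, Q * (O + Oᴴ) * Q = c • Q
    · refine ⟨Complex.I • (O - Oᴴ), ?_, supportedOn_smul _
        (by
          have := supportedOn_add hOsup (supportedOn_neg (supportedOn_conjTranspose hOsup))
          simpa [sub_eq_add_neg] using this), ?_⟩
      · rw [Matrix.conjTranspose_smul, Matrix.conjTranspose_sub,
          Matrix.conjTranspose_conjTranspose]
        rw [Complex.star_def, Complex.conj_I, neg_smul, ← smul_neg, neg_sub]
      · rintro ⟨d, hd⟩
        obtain ⟨c, hc⟩ := h1
        apply hOnc
        refine ⟨(c + -Complex.I * d) / 2, ?_⟩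
        have hsum : Q * O * Q + Q * Oᴴ * Q = c • Q := by
          rw [← hc, mul_add, add_mul]
        have hdiff : Q * O * Q - Q * Oᴴ * Q = (-Complex.I * d) • Q := by
          have h2 : Q * (Complex.I • (O - Oᴴ)) * Q
              = Complex.I • (Q * O * Q - Q * Oᴴ * Q) := by
            rw [mul_smul_comm, smul_mul_assoc, mul_sub, sub_mul]
          rw [h2] at hd
          have := congrArg (fun Z : Op n => (-Complex.I) • Z) hd
          simpa [smul_smul, neg_mul, Complex.I_mul_I] using this
        have e : Q * O * Q + Q * O * Q = (c + -Complex.I * d) • Q := by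
          calc Q * O * Q + Q * O * Q
              = (Q * O * Q + Q * Oᴴ * Q) + (Q * O * Q - Q * Oᴴ * Q) := by abel
            _ = c • Q + (-Complex.I * d) • Q := by rw [hsum, hdiff]
            _ = (c + -Complex.I * d) • Q := by rw [add_smul]
        have h2ne : (2 : ℂ) ≠ 0 := two_ne_zero
        apply smul_right_injective
          (Matrix (Fin n → Fin 2) (Fin n → Fin 2) ℂ) h2ne
        show (2 : ℂ) • (Q * O * Q) = (2 : ℂ) • (((c + -Complex.I * d) / 2) • Q)
        rw [two_smul, e, smul_smul]
        congr 1
        ring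
    · refine ⟨O + Oᴴ, ?_, supportedOn_add hOsup (supportedOn_conjTranspose hOsup), h1⟩
      rw [Matrix.conjTranspose_add, Matrix.conjTranspose_conjTranspose, add_comm]
  obtain ⟨O₁, hO₁herm, hO₁sup, hO₁nc⟩ := hkey
  refine ⟨A * O₁ * A, ?_, ?_, ?_, ?_⟩
  · rw [Matrix.conjTranspose_mul, Matrix.conjTranspose_mul, hAherm, hO₁herm, ← mul_assoc]
  · have := supportedOn_mul (supportedOn_mul hAsup hO₁sup) hAsup
    apply supportedOn_mono ?_ this
    intro x hx
    rcases hx with (hx | hx) | hx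
    · exact Or.inr hx
    · exact Or.inl hx
    · exact Or.inr hx
  · intro a
    by_cases hmem : ¬ SupportedOn Mᶜ (Qa a)
    · have haS : a ∈ S := Finset.mem_filter.mpr ⟨Finset.mem_univ a, hmem⟩
      have haA : Qa a * A = A := absorb_left hproj S _ haS
      have hAa : A * Qa a = A := absorb_right hproj S _ haS
      have l : Qa a * (A * O₁ * A) = A * O₁ * A := by
        rw [← mul_assoc, ← mul_assoc, haA]
      have r : A * O₁ * A * Qa a = A * O₁ * A := by
        rw [mul_assoc, hAa]
      exact l.trans r.symm
    · have hsupp : SupportedOn Mᶜ (Qa a) := not_not.mp hmem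
      have c1 : Commute (Qa a) O₁ := (commute_of_disjoint hO₁sup hsupp).symm
      have c2 : Commute (Qa a) A :=
        Finset.noncommProd_commute S Qa _ (Qa a) (fun x _ => hcommall a x)
      exact (c2.mul_right c1).mul_right c2
  · have key : Q * (A * O₁ * A) * Q = Q * O₁ * Q := by
      have e1 : Q * (A * O₁ * A) * Q = (Q * A) * (O₁ * (A * Q)) := by
        simp only [mul_assoc]
      rw [e1, hQA, hAQ, ← mul_assoc]
    rintro ⟨c, hc⟩
    rw [key] at hc
    exact hO₁nc ⟨c, hc⟩
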